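/- Let V be a finite set with |V| = n ≥ 3 and let S be any nonempty subset of V. Then there exists a graph G on V such that S = {v ∈ V : the induced subgraph of G on V∖{v} is disconnected}. -/

import Mathlib

open SimpleGraph

private lemma walk_invariant {W : Type*} {H : SimpleGraph W} {P : W → Prop}
    (hP : ∀ x y, H.Adj x y → (P x ↔ P y)) {a b : W} (h : H.Reachable a b) : P a ↔ P b := by
  obtain ⟨w⟩ := h
  induction w with
  | nil => rfl
  | cons h p ih => exact (hP _ _ h).trans ih

private lemma induce_adj_iff {W : Type*} (G : SimpleGraph W) (s : Set W) (x y : s) :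
    (G.induce s).Adj x y ↔ G.Adj x.val y.val := comap_adj

private def gRel (k a b : ℕ) : Prop :=
  (b = a + 1 ∧ b < k) ∨ (a = 0 ∧ b = k) ∨ (a + 1 = k ∧ k + 1 ≤ b)

private def GC (n k : ℕ) : SimpleGraph (Fin n) where
  Adj i j := i ≠ j ∧ (gRel k i.val j.val ∨ gRel k j.val i.val)
  symm := ⟨fun _ _ ⟨h1, h2⟩ => ⟨h1.symm, h2.symm⟩⟩
  loopless := ⟨fun _ ⟨h1, _⟩ => h1 rfl⟩

private lemma GC_connected (n k : ℕ) (hk : 1 ≤ k) (hkn : k + 1 ≤ n) (d : Fin n)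
    (hd : k ≤ d.val) : ((GC n k).induce {d}ᶜ).Connected := by
  have hne : ∀ m, m < k → ∀ (h : m < n), (⟨m, h⟩ : Fin n) ∈ ({d}ᶜ : Set (Fin n)) := by
    intro m hm h hmem
    have : m = d.val := congrArg Fin.val (Set.mem_singleton_iff.mp hmem)
    omega
  let r0 : ({d}ᶜ : Set (Fin n)) := ⟨⟨0, by omega⟩, hne 0 hk _⟩
  have key : ∀ m, (hm : m < k) →
      ((GC n k).induce {d}ᶜ).Reachable ⟨⟨m, by omega⟩, hne m hm _⟩ r0 := by
    intro m
    induction m with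
    | zero => intro _; exact Reachable.refl _
    | succ m ih =>
      intro hm
      have hadj : ((GC n k).induce {d}ᶜ).Adj ⟨⟨m+1, by omega⟩, hne _ hm _⟩
          ⟨⟨m, by omega⟩, hne m (by omega) _⟩ :=
        (induce_adj_iff _ _ _ _).mpr
          ⟨fun h => by have := congrArg Fin.val h; simp at this,
           Or.inr (Or.inl ⟨rfl, hm⟩)⟩
      exact hadj.reachable.trans (ih (by omega))
  have hr : ∀ x : ({d}ᶜ : Set (Fin n)), ((GC n k).induce {d}ᶜ).Reachable x r0 := by
    rintro ⟨⟨j, hjn⟩, hx⟩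
    have hxd : j ≠ d.val := by
      intro h
      exact hx (Set.mem_singleton_iff.mpr (Fin.ext h))
    rcases lt_trichotomy j k with h | h | h
    · exact key j h
    · have hadj : ((GC n k).induce {d}ᶜ).Adj ⟨⟨j, hjn⟩, hx⟩ r0 := by
        apply (induce_adj_iff _ _ _ _).mpr
        show (GC n k).Adj ⟨j, hjn⟩ ⟨0, by omega⟩
        exact ⟨fun hh => by have := congrArg Fin.val hh; simp at this; omega,
           Or.inr (Or.inr (Or.inl ⟨rfl, h⟩))⟩
      exact hadj.reachable
    · have hadj : ((GC n k).induce {d}ᶜ).Adj ⟨⟨j, hjn⟩, hx⟩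
          ⟨⟨k-1, by omega⟩, hne _ (by omega) _⟩ := by
        apply (induce_adj_iff _ _ _ _).mpr
        show (GC n k).Adj ⟨j, hjn⟩ ⟨k-1, by omega⟩
        exact ⟨fun hh => by have := congrArg Fin.val hh; simp at this; omega,
           Or.inr (Or.inr (Or.inr ⟨show k - 1 + 1 = k by omega, show k + 1 ≤ j by omega⟩))⟩
      exact hadj.reachable.trans (key (k-1) (by omega))
  haveI : Nonempty ({d}ᶜ : Set (Fin n)) := ⟨r0⟩
  exact Connected.mk (fun u v => (hr u).trans (hr v).symm)

private lemma GC_disconnected (n k : ℕ) (hkn : k + 1 < n) (d : Fin n) (hd : d.val < k) :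
    ¬ ((GC n k).induce {d}ᶜ).Connected := by
  intro hc
  have hP : ∀ x y : ({d}ᶜ : Set (Fin n)), ((GC n k).induce {d}ᶜ).Adj x y →
      ((fun z : ({d}ᶜ : Set (Fin n)) => z.val.val < d.val ∨ z.val.val = k) x ↔
       (fun z : ({d}ᶜ : Set (Fin n)) => z.val.val < d.val ∨ z.val.val = k) y) := by
    intro x y hadj
    obtain ⟨hne', hg⟩ := (induce_adj_iff _ _ _ _).mp hadj
    have ha' : x.val.val ≠ d.val := fun h => x.2 (Set.mem_singleton_iff.mpr (Fin.ext h))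
    have hb' : y.val.val ≠ d.val := fun h => y.2 (Set.mem_singleton_iff.mpr (Fin.ext h))
    simp only [gRel] at hg
    dsimp only
    omega
  have hmem : ∀ m, d.val < m → ∀ (h : m < n), (⟨m, h⟩ : Fin n) ∈ ({d}ᶜ : Set (Fin n)) := by
    intro m hm h hmem
    have : m = d.val := congrArg Fin.val (Set.mem_singleton_iff.mp hmem)
    omega
  have h2 := walk_invariant hP
    (hc.preconnected ⟨⟨k, by omega⟩, hmem _ hd _⟩ ⟨⟨k+1, by omega⟩, hmem _ (by omega) _⟩)
  have h3 : (k < d.val ∨ k = k) ↔ (k + 1 < d.val ∨ k + 1 = k) := h2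
  omega

private def GB (n : ℕ) : SimpleGraph (Fin n) where
  Adj i j := i ≠ j ∧ i.val + 2 ≤ n ∧ j.val + 2 ≤ n
  symm := ⟨fun _ _ ⟨h1, h2, h3⟩ => ⟨h1.symm, h3, h2⟩⟩
  loopless := ⟨fun _ ⟨h1, _⟩ => h1 rfl⟩

private lemma GB_connected (n : ℕ) (hn : 3 ≤ n) (d : Fin n) (hd : d.val + 1 = n) :
    ((GB n).induce {d}ᶜ).Connected := by
  have hmem : ∀ m, m + 2 ≤ n → ∀ (h : m < n), (⟨m, h⟩ : Fin n) ∈ ({d}ᶜ : Set (Fin n)) := by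
    intro m hm h hmem
    have : m = d.val := congrArg Fin.val (Set.mem_singleton_iff.mp hmem)
    omega
  haveI : Nonempty ({d}ᶜ : Set (Fin n)) := ⟨⟨⟨0, by omega⟩, hmem 0 (by omega) _⟩⟩
  apply Connected.mk
  rintro ⟨⟨a, han⟩, ha⟩ ⟨⟨b, hbn⟩, hb⟩
  have ha' : a ≠ d.val := fun h => ha (Set.mem_singleton_iff.mpr (Fin.ext h))
  have hb' : b ≠ d.val := fun h => hb (Set.mem_singleton_iff.mpr (Fin.ext h))
  by_cases hab : a = b
  · subst hab
    exact Reachable.refl _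
  · refine Adj.reachable ?_
    apply (induce_adj_iff _ _ _ _).mpr
    show (GB n).Adj ⟨a, han⟩ ⟨b, hbn⟩
    exact ⟨fun hh => hab (congrArg Fin.val hh), show a + 2 ≤ n by omega, show b + 2 ≤ n by omega⟩

private lemma GB_disconnected (n : ℕ) (hn : 3 ≤ n) (d : Fin n) (hd : d.val + 2 ≤ n) :
    ¬ ((GB n).induce {d}ᶜ).Connected := by
  intro hc
  have hP : ∀ x y : ({d}ᶜ : Set (Fin n)), ((GB n).induce {d}ᶜ).Adj x y →
      ((fun z : ({d}ᶜ : Set (Fin n)) => z.val.val + 2 ≤ n) x ↔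
       (fun z : ({d}ᶜ : Set (Fin n)) => z.val.val + 2 ≤ n) y) := by
    intro x y hadj
    obtain ⟨_, h2, h3⟩ := (induce_adj_iff _ _ _ _).mp hadj
    dsimp only
    omega
  set u : ℕ := if d.val = 0 then 1 else 0 with hu
  have hmem : ∀ m, m ≠ d.val → ∀ (h : m < n), (⟨m, h⟩ : Fin n) ∈ ({d}ᶜ : Set (Fin n)) := by
    intro m hm h hmem
    exact hm (congrArg Fin.val (Set.mem_singleton_iff.mp hmem))
  have hund : u ≠ d.val := by rw [hu]; split <;> omega
  have hult : u < n := by have : u ≤ 1 := by rw [hu]; split <;> omega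
                          omega
  have h2 := walk_invariant hP
    (hc.preconnected ⟨⟨n-1, by omega⟩, hmem _ (by omega) _⟩ ⟨⟨u, hult⟩, hmem _ hund _⟩)
  have h3 : (n - 1 + 2 ≤ n) ↔ (u + 2 ≤ n) := h2
  rw [hu] at h3
  rcases h3 with ⟨hl, hr⟩
  have := hr (by split <;> omega)
  omega

private lemma bot_disconnected (n : ℕ) (hn : 3 ≤ n) (d : Fin n) :
    ¬ ((⊥ : SimpleGraph (Fin n)).induce {d}ᶜ).Connected := by
  intro hc
  have hP : ∀ x y : ({d}ᶜ : Set (Fin n)), ((⊥ : SimpleGraph (Fin n)).induce {d}ᶜ).Adj x y →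
      ((fun z : ({d}ᶜ : Set (Fin n)) => z.val.val = if d.val = 0 then 1 else 0) x ↔
       (fun z : ({d}ᶜ : Set (Fin n)) => z.val.val = if d.val = 0 then 1 else 0) y) := by
    intro x y hadj
    exact absurd ((induce_adj_iff _ _ _ _).mp hadj) (by simp)
  set u : ℕ := if d.val = 0 then 1 else 0 with hu
  set w : ℕ := if d.val = 2 then 1 else 2 with hw
  have hmem : ∀ m, m ≠ d.val → ∀ (h : m < n), (⟨m, h⟩ : Fin n) ∈ ({d}ᶜ : Set (Fin n)) := by
    intro m hm h hmem
    exact hm (congrArg Fin.val (Set.mem_singleton_iff.mp hmem))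
  have hund : u ≠ d.val := by rw [hu]; split <;> omega
  have hwnd : w ≠ d.val := by rw [hw]; split <;> omega
  have huw : u ≠ w := by rw [hu, hw]; split <;> split <;> omega
  have hult : u < n := by have : u ≤ 1 := by rw [hu]; split <;> omega
                          omega
  have hwlt : w < n := by have : w ≤ 2 := by rw [hw]; split <;> omega
                          omega
  have h2 := walk_invariant hP
    (hc.preconnected ⟨⟨u, hult⟩, hmem _ hund _⟩ ⟨⟨w, hwlt⟩, hmem _ hwnd _⟩)
  have h3 : (u = u) ↔ (w = u) := h2
  exact huw (h3.mp rfl).symm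

private lemma fin_side (n k : ℕ) (h3 : 3 ≤ n) (hk1 : 1 ≤ k) (hkn : k ≤ n) :
    ∃ H : SimpleGraph (Fin n), ∀ d : Fin n,
      (¬ (H.induce ({d}ᶜ : Set (Fin n))).Connected ↔ d.val < k) := by
  rcases eq_or_lt_of_le hkn with heq | hlt
  · subst heq
    exact ⟨⊥, fun d => ⟨fun _ => d.isLt, fun _ => bot_disconnected _ h3 d⟩⟩
  rcases eq_or_lt_of_le (Nat.succ_le_of_lt hlt) with heq | hlt2
  · -- k + 1 = n
    refine ⟨GB n, fun d => ?_⟩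
    constructor
    · intro hdis
      by_contra hge
      push_neg at hge
      exact hdis (GB_connected n h3 d (by omega))
    · intro hlt'
      exact GB_disconnected n h3 d (by omega)
  · -- k + 1 < n
    refine ⟨GC n k, fun d => ?_⟩
    constructor
    · intro hdis
      by_contra hge
      push_neg at hge
      exact hdis (GC_connected n k hk1 (by omega) d hge)
    · exact GC_disconnected n k hlt2 d

/-- Every nonempty subset `S` of an `n`-vertex set (`n ≥ 3`) is the set of vertices
whose deletion disconnects some graph `G` on `V`; i.e. `m(0,n) = 0`. -/
theorem stmt_10 {V : Type*} [Fintype V] [DecidableEq V]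
    (hn : 3 ≤ Fintype.card V) (S : Set V) (hS : S.Nonempty) :
    ∃ G : SimpleGraph V,
      S = {v : V | ¬ (G.induce ({v}ᶜ : Set V)).Connected} := by
  classical
  set n := Fintype.card V with hndef
  set k := Fintype.card S with hkdef
  haveI : Nonempty S := hS.to_subtype
  have hk1 : 1 ≤ k := Fintype.card_pos
  have hsum : k + Fintype.card ↥(Sᶜ) = n := by
    have h1 : Fintype.card (↥S ⊕ ↥(Sᶜ : Set V)) = n := Fintype.card_congr (Equiv.Set.sumCompl S)
    rw [Fintype.card_sum] at h1
    rw [hkdef]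
    exact h1
  let e : V ≃ Fin n := (Equiv.Set.sumCompl S).symm.trans
    (((Fintype.equivFin ↥S).sumCongr (Fintype.equivFin ↥(Sᶜ : Set V))).trans
      (finSumFinEquiv.trans (finCongr hsum)))
  have he : ∀ v, ((e v).val < k ↔ v ∈ S) := by
    intro v
    by_cases hv : v ∈ S
    · simp only [e, Equiv.trans_apply, Equiv.Set.sumCompl_symm_apply_of_mem hv,
        Equiv.sumCongr_apply, Sum.map_inl, finSumFinEquiv_apply_left, finCongr_apply,
        Fin.coe_cast, Fin.coe_castAdd]
      refine iff_of_true ?_ hv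
      rw [hkdef]
      exact Fin.isLt _
    · simp only [e, Equiv.trans_apply, Equiv.Set.sumCompl_symm_apply_of_notMem hv,
        Equiv.sumCongr_apply, Sum.map_inr, finSumFinEquiv_apply_right, finCongr_apply,
        Fin.coe_cast, Fin.coe_natAdd]
      refine iff_of_false ?_ hv
      rw [hkdef]
      omega
  obtain ⟨H, hH⟩ := fin_side n k hn hk1 (by omega)
  refine ⟨H.comap e, ?_⟩
  ext v
  have iso : ((H.comap e).induce ({v}ᶜ : Set V)) ≃g (H.induce ({e v}ᶜ : Set (Fin n))) :=
    { toEquiv := e.subtypeEquiv (fun a => by simp)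
      map_rel_iff' := Iff.rfl }
  simp only [Set.mem_setOf_eq]
  rw [iso.connected_iff.not, hH (e v), he v]
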